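/- Let 1 ≤ i ≤ N, let I ∈ S_i and let λ be any weight. If i = N, then e_N f_I v_λ = (q² - q^{-2})^{-1} f_{I₁} (k_N² - k_N^{-2}) v_λ in M(λ). If i < N, then e_i f_I v_λ = (q² - q^{-2})^{-1} f_{I₁} f_{I₂} (q² k_i² - q^{-2} k_i^{-2}) v_λ in M(λ). -/

import Mathlib

noncomputable section

open FreeAlgebra

/-- `𝕜 = F(q)`, the field of rational functions over `F`. -/
abbrev kk (F : Type) [Field F] : Type := RatFunc F

/-- The variable `q`. -/
def qq (F : Type) [Field F] : kk F := RatFunc.X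

/-- `v = q²`. -/
def vv (F : Type) [Field F] : kk F := qq F ^ 2

/-- The balanced quantum integer `[n]_v`. -/
def qint (F : Type) [Field F] (n : ℤ) : kk F :=
  (vv F ^ n - vv F ^ (-n)) / (vv F - (vv F)⁻¹)

/-- The quantum factorial `[m]_v!`. -/
def qfact (F : Type) [Field F] (m : ℕ) : kk F :=
  ∏ j ∈ Finset.Icc 1 m, qint F j

/-- The balanced Gaussian binomial coefficient `C(n,i)_v`. -/
def qbinom (F : Type) [Field F] (n i : ℕ) : kk F :=
  qfact F n / (qfact F i * qfact F (n - i))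

/-- The Cartan matrix of `sl(N+1)`, with 1-based indices. -/
def cartan (i j : ℕ) : ℤ :=
  if i = j then 2 else if i + 1 = j ∨ j + 1 = i then -1 else 0

/-- Generators of `U_q(sl(N+1))`: `e i`, `f i`, `k i`, `kinv i` (0-based `i : Fin N`,
corresponding to the 1-based index `i+1`). -/
inductive Gen (N : ℕ) : Type
  | e : Fin N → Gen N
  | f : Fin N → Gen N
  | k : Fin N → Gen N
  | kinv : Fin N → Gen N

/-- The defining relations of `U_q(sl(N+1))`. -/
inductive UqRel (F : Type) [Field F] (N : ℕ) :
    FreeAlgebra (kk F) (Gen N) → FreeAlgebra (kk F) (Gen N) → Prop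
  | kkinv (i : Fin N) : UqRel F N (ι (kk F) (Gen.k i) * ι (kk F) (Gen.kinv i)) 1
  | kinvk (i : Fin N) : UqRel F N (ι (kk F) (Gen.kinv i) * ι (kk F) (Gen.k i)) 1
  | kcomm (i j : Fin N) :
      UqRel F N (ι (kk F) (Gen.k i) * ι (kk F) (Gen.k j))
        (ι (kk F) (Gen.k j) * ι (kk F) (Gen.k i))
  | ke (i j : Fin N) :
      UqRel F N (ι (kk F) (Gen.k i) * ι (kk F) (Gen.e j) * ι (kk F) (Gen.kinv i))
        ((qq F ^ cartan ((i : ℕ) + 1) ((j : ℕ) + 1)) • ι (kk F) (Gen.e j))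
  | kf (i j : Fin N) :
      UqRel F N (ι (kk F) (Gen.k i) * ι (kk F) (Gen.f j) * ι (kk F) (Gen.kinv i))
        ((qq F ^ (-cartan ((i : ℕ) + 1) ((j : ℕ) + 1))) • ι (kk F) (Gen.f j))
  | ef (i j : Fin N) :
      UqRel F N (ι (kk F) (Gen.e i) * ι (kk F) (Gen.f j) - ι (kk F) (Gen.f j) * ι (kk F) (Gen.e i))
        (if i = j then
          ((qq F ^ 2 - qq F ^ (-2 : ℤ))⁻¹) •
            ((ι (kk F) (Gen.k i)) ^ 2 - (ι (kk F) (Gen.kinv i)) ^ 2)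
        else 0)
  | serre_e_near (i j : Fin N) (h : (i : ℕ) + 1 = j ∨ (j : ℕ) + 1 = i) :
      UqRel F N
        ((ι (kk F) (Gen.e i)) ^ 2 * ι (kk F) (Gen.e j)
          - (qq F ^ 2 + qq F ^ (-2 : ℤ)) •
              (ι (kk F) (Gen.e i) * ι (kk F) (Gen.e j) * ι (kk F) (Gen.e i))
          + ι (kk F) (Gen.e j) * (ι (kk F) (Gen.e i)) ^ 2) 0
  | serre_f_near (i j : Fin N) (h : (i : ℕ) + 1 = j ∨ (j : ℕ) + 1 = i) :
      UqRel F N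
        ((ι (kk F) (Gen.f i)) ^ 2 * ι (kk F) (Gen.f j)
          - (qq F ^ 2 + qq F ^ (-2 : ℤ)) •
              (ι (kk F) (Gen.f i) * ι (kk F) (Gen.f j) * ι (kk F) (Gen.f i))
          + ι (kk F) (Gen.f j) * (ι (kk F) (Gen.f i)) ^ 2) 0
  | serre_e_far (i j : Fin N) (h : (i : ℕ) + 1 < j ∨ (j : ℕ) + 1 < i) :
      UqRel F N (ι (kk F) (Gen.e i) * ι (kk F) (Gen.e j))
        (ι (kk F) (Gen.e j) * ι (kk F) (Gen.e i))
  | serre_f_far (i j : Fin N) (h : (i : ℕ) + 1 < j ∨ (j : ℕ) + 1 < i) :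
      UqRel F N (ι (kk F) (Gen.f i) * ι (kk F) (Gen.f j))
        (ι (kk F) (Gen.f j) * ι (kk F) (Gen.f i))

/-- The quantized enveloping algebra `U = U_q(sl(N+1))`. -/
abbrev Uq (F : Type) [Field F] (N : ℕ) : Type := RingQuot (UqRel F N)

variable (F : Type) [Field F] (N : ℕ)

/-- The image of a generator in `U`. -/
def gen (g : Gen N) : Uq F N := RingQuot.mkAlgHom (kk F) (UqRel F N) (ι (kk F) g)

/-- `e_i` (1-based index `1 ≤ i ≤ N`; junk value `0` outside this range). -/
def egen (i : ℕ) : Uq F N :=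
  if h : 1 ≤ i ∧ i ≤ N then gen F N (Gen.e ⟨i - 1, by omega⟩) else 0

/-- `f_i` (1-based index). -/
def fgen (i : ℕ) : Uq F N :=
  if h : 1 ≤ i ∧ i ≤ N then gen F N (Gen.f ⟨i - 1, by omega⟩) else 0

/-- `k_i` (1-based index). -/
def kgen (i : ℕ) : Uq F N :=
  if h : 1 ≤ i ∧ i ≤ N then gen F N (Gen.k ⟨i - 1, by omega⟩) else 0

/-- `k_i⁻¹` (1-based index). -/
def kinvgen (i : ℕ) : Uq F N :=
  if h : 1 ≤ i ∧ i ≤ N then gen F N (Gen.kinv ⟨i - 1, by omega⟩) else 0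

/-- Auxiliary recursion: `fword i d = f_{i, i+1+d}`. -/
def fword (i : ℕ) : ℕ → Uq F N
  | 0 => fgen F N i
  | d + 1 =>
      qq F • (fword i d * fgen F N (i + 1 + d)) -
        (qq F)⁻¹ • (fgen F N (i + 1 + d) * fword i d)

/-- The quantum root vector `f_{i,j}` (for `1 ≤ i < j ≤ N+1`). -/
def fij (i j : ℕ) : Uq F N := fword F N i (j - i - 1)

/-- Product of `f_{a,b}` over successive entries of a list. -/
def fList : List ℕ → Uq F N
  | a :: b :: rest => fij F N a b * fList (b :: rest)
  | _ => 1

/-- `f_S` for a finite set `S` of indices. -/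
def fSet (S : Finset ℕ) : Uq F N := fList F N (S.sort (· ≤ ·))

/-- The index set `𝕀` of subsets of `{1,…,N+1}` containing `1` and `N+1`. -/
def II : Finset (Finset ℕ) :=
  (Finset.Icc 1 (N + 1)).powerset.filter fun I => 1 ∈ I ∧ N + 1 ∈ I

/-- `r(I) = {s - 1 : s ∈ {1,…,N+1} \ I}`. -/
def rSet (I : Finset ℕ) : Finset ℕ := (Finset.Icc 1 (N + 1) \ I).image (· - 1)

/-- `k_{σ_i} = k_1 ⋯ k_i`. -/
def kσ (i : ℕ) : Uq F N := ((List.range i).map fun j => kgen F N (j + 1)).prod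

/-- `K_{σ_i} = k_{σ_i}²`. -/
def Kσ (i : ℕ) : Uq F N := kσ F N i ^ 2

/-- `k_{σ_i}⁻¹ = k_1⁻¹ ⋯ k_i⁻¹`. -/
def kσinv (i : ℕ) : Uq F N := ((List.range i).map fun j => kinvgen F N (j + 1)).prod

/-- `K_{σ_i}⁻¹`. -/
def KσInv (i : ℕ) : Uq F N := kσinv F N i ^ 2

/-- The element `h_i = -q⁻¹ v^{-(i-1)} K_{σ_i}⁻¹ (K_{σ_i} v^i - K_{σ_i}⁻¹ v^{-i})/(v - v⁻¹) ∈ U`. -/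
def hElt (i : ℕ) : Uq F N :=
  (-(qq F)⁻¹ * vv F ^ (1 - (i : ℤ)) * (vv F - (vv F)⁻¹)⁻¹) •
    (KσInv F N i * (vv F ^ (i : ℤ) • Kσ F N i - vv F ^ (-(i : ℤ)) • KσInv F N i))

/-- `H_I = ∏_{i ∈ r(I)} h_i` (product taken in increasing order of indices). -/
def HI (I : Finset ℕ) : Uq F N := (((rSet N I).sort (· ≤ ·)).map (hElt F N)).prod

/-- A weight `λ` is recorded by its values `(λ, α_j)` for `1 ≤ j ≤ N`;
`pairσ lam i = (λ, σ_i) = (λ, α_1 + ⋯ + α_i)`. -/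
def pairσ (lam : ℕ → ℤ) (i : ℕ) : ℤ := ∑ j ∈ Finset.Icc 1 i, lam j

/-- The scalar `h_i(λ) = -q⁻¹ v^{-((λ,σ_i)+i-1)} [(λ,σ_i)+i]_v`. -/
def hval (lam : ℕ → ℤ) (i : ℕ) : kk F :=
  -(qq F)⁻¹ * vv F ^ (-(pairσ lam i + (i : ℤ) - 1)) * qint F (pairσ lam i + (i : ℤ))

/-- The scalar `H_I(λ) = ∏_{i ∈ r(I)} h_i(λ)`. -/
def HIval (lam : ℕ → ℤ) (I : Finset ℕ) : kk F := ∏ i ∈ rSet N I, hval F lam i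

/-- The left ideal `J_λ` of `U` generated by `e_1, …, e_N` and the `k_j - q^{(λ,α_j)}`. -/
def vermaIdeal (lam : ℕ → ℤ) : Submodule (Uq F N) (Uq F N) :=
  Submodule.span (Uq F N)
    ({x | ∃ j, 1 ≤ j ∧ j ≤ N ∧ x = egen F N j} ∪
      {x | ∃ j, 1 ≤ j ∧ j ≤ N ∧
        x = kgen F N j - algebraMap (kk F) (Uq F N) (qq F ^ lam j)})

/-- The Verma module `M(λ) = U/J_λ`. -/
abbrev Verma (lam : ℕ → ℤ) : Type := Uq F N ⧸ vermaIdeal F N lam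

/-- The highest weight vector `v_λ`, the image of `1` in `M(λ)`. -/
def hw (lam : ℕ → ℤ) : Verma F N lam := Submodule.Quotient.mk 1

/-- The candidate Shapovalov element `Θ_η = Σ_{I ∈ 𝕀} f_I H_I`. -/
def Theta : Uq F N := ∑ I ∈ II N, fSet F N I * HI F N I

/-- `D^n(λ)`: the `(n-1) × (n-1)` matrix over `U` with `(i,j)` entry (1-based)
`f_{i,j+1}` if `i ≤ j`, `-h_j(λ)·1` if `i = j+1`, and `0` otherwise. -/
def Dmat (lam : ℕ → ℤ) (n : ℕ) : Matrix (Fin (n - 1)) (Fin (n - 1)) (Uq F N) :=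
  Matrix.of fun i j =>
    if (i : ℕ) ≤ (j : ℕ) then fij F N ((i : ℕ) + 1) ((j : ℕ) + 2)
    else if (i : ℕ) = (j : ℕ) + 1 then
      -(algebraMap (kk F) (Uq F N) (hval F lam ((j : ℕ) + 1)))
    else 0

/-- The left-to-right determinant of a matrix with noncommutative entries. -/
def ldet {m : ℕ} (B : Matrix (Fin m) (Fin m) (Uq F N)) : Uq F N :=
  ∑ w : Equiv.Perm (Fin m),
    ((Equiv.Perm.sign w : ℤˣ) : ℤ) • ((List.finRange m).map fun j => B (w j) j).prod

end

section Aux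
open FreeAlgebra
variable (F : Type) [Field F] (N : ℕ)

lemma q_ne : qq F ≠ 0 := RatFunc.X_ne_zero

namespace UqAux

lemma genrel {a b : FreeAlgebra (kk F) (Gen N)} (h : UqRel F N a b) :
    RingQuot.mkAlgHom (kk F) (UqRel F N) a = RingQuot.mkAlgHom (kk F) (UqRel F N) b :=
  RingQuot.mkAlgHom_rel _ h

lemma k_kinv (i : Fin N) : gen F N (Gen.k i) * gen F N (Gen.kinv i) = 1 := by
  simpa [gen, map_mul, map_one] using genrel F N (UqRel.kkinv i)

lemma kinv_k (i : Fin N) : gen F N (Gen.kinv i) * gen F N (Gen.k i) = 1 := by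
  simpa [gen, map_mul, map_one] using genrel F N (UqRel.kinvk i)

lemma k_f_kinv (i j : Fin N) :
    gen F N (Gen.k i) * gen F N (Gen.f j) * gen F N (Gen.kinv i) =
      (qq F ^ (-cartan ((i:ℕ)+1) ((j:ℕ)+1))) • gen F N (Gen.f j) := by
  simpa [gen, map_mul, map_smul] using genrel F N (UqRel.kf i j)

lemma k_f (i j : Fin N) :
    gen F N (Gen.k i) * gen F N (Gen.f j) =
      (qq F ^ (-cartan ((i:ℕ)+1) ((j:ℕ)+1))) • (gen F N (Gen.f j) * gen F N (Gen.k i)) := by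
  calc gen F N (Gen.k i) * gen F N (Gen.f j)
      = gen F N (Gen.k i) * gen F N (Gen.f j) *
          (gen F N (Gen.kinv i) * gen F N (Gen.k i)) := by rw [kinv_k, mul_one]
    _ = (gen F N (Gen.k i) * gen F N (Gen.f j) * gen F N (Gen.kinv i)) * gen F N (Gen.k i) := by
        noncomm_ring
    _ = (qq F ^ (-cartan ((i:ℕ)+1) ((j:ℕ)+1))) • (gen F N (Gen.f j) * gen F N (Gen.k i)) := by
        rw [k_f_kinv, smul_mul_assoc]

lemma kinv_f (i j : Fin N) :
    gen F N (Gen.kinv i) * gen F N (Gen.f j) =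
      (qq F ^ (cartan ((i:ℕ)+1) ((j:ℕ)+1))) • (gen F N (Gen.f j) * gen F N (Gen.kinv i)) := by
  have h : gen F N (Gen.f j) * gen F N (Gen.kinv i) =
      (qq F ^ (-cartan ((i:ℕ)+1) ((j:ℕ)+1))) • (gen F N (Gen.kinv i) * gen F N (Gen.f j)) := by
    calc gen F N (Gen.f j) * gen F N (Gen.kinv i)
        = (gen F N (Gen.kinv i) * gen F N (Gen.k i)) * gen F N (Gen.f j) *
            gen F N (Gen.kinv i) := by rw [kinv_k, one_mul]
      _ = gen F N (Gen.kinv i) * (gen F N (Gen.k i) * gen F N (Gen.f j) *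
            gen F N (Gen.kinv i)) := by noncomm_ring
      _ = (qq F ^ (-cartan ((i:ℕ)+1) ((j:ℕ)+1))) •
            (gen F N (Gen.kinv i) * gen F N (Gen.f j)) := by rw [k_f_kinv, mul_smul_comm]
  rw [h, smul_smul, ← zpow_add₀ (q_ne F), add_neg_cancel, zpow_zero, one_smul]

lemma e_f (i j : Fin N) :
    gen F N (Gen.e i) * gen F N (Gen.f j) - gen F N (Gen.f j) * gen F N (Gen.e i) =
      if i = j then
        ((qq F ^ 2 - qq F ^ (-2 : ℤ))⁻¹) • ((gen F N (Gen.k i))^2 - (gen F N (Gen.kinv i))^2)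
      else 0 := by
  have := genrel F N (UqRel.ef i j)
  simp only [gen, map_sub, map_mul, map_smul, map_pow, apply_ite
    (RingQuot.mkAlgHom (kk F) (UqRel F N)), map_zero] at this ⊢
  exact this

end UqAux
end Aux

section Aux2
open FreeAlgebra
variable (F : Type) [Field F] (N : ℕ)
namespace UqAux

lemma fgen_out {j : ℕ} (h : ¬(1 ≤ j ∧ j ≤ N)) : fgen F N j = 0 := dif_neg h

lemma egen_eq {i : ℕ} (h1 : 1 ≤ i) (h2 : i ≤ N) :
    egen F N i = gen F N (Gen.e ⟨i - 1, by omega⟩) := dif_pos ⟨h1, h2⟩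

lemma fgen_eq {i : ℕ} (h1 : 1 ≤ i) (h2 : i ≤ N) :
    fgen F N i = gen F N (Gen.f ⟨i - 1, by omega⟩) := dif_pos ⟨h1, h2⟩

lemma kgen_eq {i : ℕ} (h1 : 1 ≤ i) (h2 : i ≤ N) :
    kgen F N i = gen F N (Gen.k ⟨i - 1, by omega⟩) := dif_pos ⟨h1, h2⟩

lemma kinvgen_eq {i : ℕ} (h1 : 1 ≤ i) (h2 : i ≤ N) :
    kinvgen F N i = gen F N (Gen.kinv ⟨i - 1, by omega⟩) := dif_pos ⟨h1, h2⟩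

/-- `e_i` commutes with `f_j` for `i ≠ j`. -/
lemma ef_comm {i : ℕ} (h1 : 1 ≤ i) (h2 : i ≤ N) {j : ℕ} (hij : i ≠ j) :
    Commute (egen F N i) (fgen F N j) := by
  by_cases hj : 1 ≤ j ∧ j ≤ N
  · rw [egen_eq F N h1 h2, fgen_eq F N hj.1 hj.2]
    have h := e_f F N ⟨i - 1, by omega⟩ ⟨j - 1, by omega⟩
    rw [if_neg (by simp only [Fin.mk.injEq]; omega)] at h
    exact sub_eq_zero.mp h
  · rw [fgen_out F N hj]
    exact Commute.zero_right _

/-- The `e_i f_i` relation in terms of the 1-based generators. -/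
lemma ef_same {i : ℕ} (h1 : 1 ≤ i) (h2 : i ≤ N) :
    egen F N i * fgen F N i = fgen F N i * egen F N i +
      ((qq F ^ 2 - qq F ^ (-2 : ℤ))⁻¹) • ((kgen F N i)^2 - (kinvgen F N i)^2) := by
  rw [egen_eq F N h1 h2, fgen_eq F N h1 h2, kgen_eq F N h1 h2, kinvgen_eq F N h1 h2]
  have h := e_f F N ⟨i - 1, by omega⟩ ⟨i - 1, by omega⟩
  rw [if_pos rfl] at h
  exact sub_eq_iff_eq_add'.mp h

/-- `k_i` commutes with `f_j` for `j ≥ i + 2`. -/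
lemma kf_comm_far {i : ℕ} (h1 : 1 ≤ i) (h2 : i ≤ N) {j : ℕ} (hij : i + 2 ≤ j) :
    Commute (kgen F N i) (fgen F N j) := by
  by_cases hj : 1 ≤ j ∧ j ≤ N
  · rw [kgen_eq F N h1 h2, fgen_eq F N hj.1 hj.2]
    have h := k_f F N ⟨i - 1, by omega⟩ ⟨j - 1, by omega⟩
    have hc : cartan ((i - 1 : ℕ) + 1) ((j - 1 : ℕ) + 1) = 0 := by
      simp only [cartan]; rw [if_neg (by omega), if_neg (by omega)]
    rw [hc] at h
    have := (by simpa using h : _ * _ = _)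
    exact this
  · rw [fgen_out F N hj]
    exact Commute.zero_right _

lemma kinvf_comm_far {i : ℕ} (h1 : 1 ≤ i) (h2 : i ≤ N) {j : ℕ} (hij : i + 2 ≤ j) :
    Commute (kinvgen F N i) (fgen F N j) := by
  by_cases hj : 1 ≤ j ∧ j ≤ N
  · rw [kinvgen_eq F N h1 h2, fgen_eq F N hj.1 hj.2]
    have h := kinv_f F N ⟨i - 1, by omega⟩ ⟨j - 1, by omega⟩
    have hc : cartan ((i - 1 : ℕ) + 1) ((j - 1 : ℕ) + 1) = 0 := by
      simp only [cartan]; rw [if_neg (by omega), if_neg (by omega)]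
    rw [hc] at h
    have := (by simpa using h : _ * _ = _)
    exact this
  · rw [fgen_out F N hj]
    exact Commute.zero_right _

/-- `k_i f_{i+1} = q f_{i+1} k_i`. -/
lemma kf_q {i : ℕ} (h1 : 1 ≤ i) (h2 : i + 1 ≤ N) :
    kgen F N i * fgen F N (i + 1) = qq F • (fgen F N (i + 1) * kgen F N i) := by
  rw [kgen_eq F N h1 (by omega), fgen_eq F N (by omega) h2]
  have h := k_f F N ⟨i - 1, by omega⟩ ⟨i + 1 - 1, by omega⟩
  have hc : cartan ((i - 1 : ℕ) + 1) ((i + 1 - 1 : ℕ) + 1) = -1 := by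
    simp only [cartan]; rw [if_neg (by omega), if_pos (by omega)]
  rw [hc] at h
  simpa using h

/-- `k_i⁻¹ f_{i+1} = q⁻¹ f_{i+1} k_i⁻¹`. -/
lemma kinvf_q {i : ℕ} (h1 : 1 ≤ i) (h2 : i + 1 ≤ N) :
    kinvgen F N i * fgen F N (i + 1) =
      (qq F ^ (-1 : ℤ)) • (fgen F N (i + 1) * kinvgen F N i) := by
  rw [kinvgen_eq F N h1 (by omega), fgen_eq F N (by omega) h2]
  have h := kinv_f F N ⟨i - 1, by omega⟩ ⟨i + 1 - 1, by omega⟩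
  have hc : cartan ((i - 1 : ℕ) + 1) ((i + 1 - 1 : ℕ) + 1) = -1 := by
    simp only [cartan]; rw [if_neg (by omega), if_pos (by omega)]
  rw [hc] at h
  exact h

end UqAux
end Aux2

section Aux3
open FreeAlgebra
variable (F : Type) [Field F] (N : ℕ)
namespace UqAux

/-- Generic: an element commuting with all the relevant `f_m` commutes with `fword a d`. -/
lemma commute_fword (x : Uq F N) (a d : ℕ)
    (h : ∀ m, a ≤ m → m ≤ a + d → Commute x (fgen F N m)) :
    Commute x (fword F N a d) := by
  induction d with
  | zero => exact h a le_rfl (by omega)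
  | succ d ih =>
    have h1 : Commute x (fword F N a d) := ih fun m hm hm' => h m hm (by omega)
    have h2 : Commute x (fgen F N (a + 1 + d)) := h (a + 1 + d) (by omega) (by omega)
    show Commute x (qq F • (fword F N a d * fgen F N (a + 1 + d)) -
      (qq F)⁻¹ • (fgen F N (a + 1 + d) * fword F N a d))
    exact ((h1.mul_right h2).smul_right _).sub_right ((h2.mul_right h1).smul_right _)

lemma commute_fij (x : Uq F N) (a b : ℕ)
    (h : ∀ m, a ≤ m → m ≤ b - 1 → Commute x (fgen F N m)) (hab : a < b) :
    Commute x (fij F N a b) :=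
  commute_fword F N x a (b - a - 1) fun m hm hm' => h m hm (by omega)

lemma fList_nil : fList F N [] = 1 := rfl
lemma fList_single (a : ℕ) : fList F N [a] = 1 := rfl
lemma fList_cons_cons (a b : ℕ) (l : List ℕ) :
    fList F N (a :: b :: l) = fij F N a b * fList F N (b :: l) := rfl

/-- Generic: commuting with `fList l`. -/
lemma commute_fList (x : Uq F N) (P : ℕ → Prop)
    (hP : ∀ a b, P a → P b → a < b → Commute x (fij F N a b)) :
    ∀ (l : List ℕ), l.Pairwise (· < ·) → (∀ y ∈ l, P y) → Commute x (fList F N l)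
  | [] , _, _ => Commute.one_right x
  | [a], _, _ => Commute.one_right x
  | a :: b :: l, hpw, hp => by
    rw [fList_cons_cons]
    have hab : a < b := (List.pairwise_cons.mp hpw).1 b (by simp)
    exact (hP a b (hp a (by simp)) (hp b (by simp)) hab).mul_right
      (commute_fList x P hP (b :: l) (List.pairwise_cons.mp hpw).2
        fun y hy => hp y (List.mem_cons_of_mem a hy))

/-- Splitting `fList` at the last entry of the first part. -/
lemma fList_split : ∀ (l₁ : List ℕ) (hne : l₁ ≠ []) (l₂ : List ℕ),
    fList F N (l₁ ++ l₂) = fList F N l₁ * fList F N (l₁.getLast hne :: l₂)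
  | [], hne, _ => absurd rfl hne
  | [a], _, l₂ => by simp [fList_single, List.getLast]
  | a :: b :: t, _, l₂ => by
    have ih := fList_split (b :: t) (by simp) l₂
    simp only [List.cons_append, fList_cons_cons]
    rw [List.getLast_cons (by simp : b :: t ≠ []), ← List.cons_append, ih, mul_assoc]

/-- Semiconjugation by a scalar through a product. -/
lemma semiconj_mul {k x y : Uq F N} {c : kk F} (hx : k * x = c • (x * k))
    (hy : Commute k y) : k * (x * y) = c • ((x * y) * k) := by
  rw [← mul_assoc, hx, smul_mul_assoc, mul_assoc, hy.eq, ← mul_assoc]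

lemma semiconj_mul' {k x y : Uq F N} {c : kk F} (hy : Commute k y)
    (hx : k * x = c • (x * k)) : k * (y * x) = c • ((y * x) * k) := by
  rw [← mul_assoc, hy.eq, mul_assoc, hx, mul_smul_comm, ← mul_assoc]

/-- Semiconjugation through `fword a d` when only the lowest index is non-commuting. -/
lemma semiconj_fword (k : Uq F N) (c : kk F) (a : ℕ)
    (hbase : k * fgen F N a = c • (fgen F N a * k))
    (hfar : ∀ m, a + 1 ≤ m → Commute k (fgen F N m)) (d : ℕ) :
    k * fword F N a d = c • (fword F N a d * k) := by
  induction d with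
  | zero => exact hbase
  | succ d ih =>
    have hg : Commute k (fgen F N (a + 1 + d)) := hfar (a + 1 + d) (by omega)
    show k * (qq F • (fword F N a d * fgen F N (a + 1 + d)) -
        (qq F)⁻¹ • (fgen F N (a + 1 + d) * fword F N a d)) =
      c • ((qq F • (fword F N a d * fgen F N (a + 1 + d)) -
        (qq F)⁻¹ • (fgen F N (a + 1 + d) * fword F N a d)) * k)
    rw [mul_sub, mul_smul_comm, mul_smul_comm, semiconj_mul F N ih hg,
      semiconj_mul' F N hg ih, sub_mul, smul_mul_assoc, smul_mul_assoc, smul_sub,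
      smul_smul, smul_smul, smul_smul, smul_smul, mul_comm c (qq F), mul_comm c (qq F)⁻¹]

/-- Squares: if `k x = c x k` then `k² x = c² x k²`. -/
lemma semiconj_sq {k x : Uq F N} {c : kk F} (h : k * x = c • (x * k)) :
    k ^ 2 * x = (c ^ 2) • (x * k ^ 2) := by
  have : k * (x * k) = c • ((x * k) * k) := by
    rw [← mul_assoc, h, smul_mul_assoc]
  rw [pow_two, mul_assoc, h, mul_smul_comm, this, smul_smul, ← pow_two, mul_assoc, pow_two]

end UqAux
end Aux3

section Aux4
open FreeAlgebra
variable (F : Type) [Field F] (N : ℕ)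
namespace UqAux

lemma sort_split (I : Finset ℕ) (i : ℕ) :
    I.sort (· ≤ ·) =
      (I.filter (· ≤ i)).sort (· ≤ ·) ++ (I.filter (fun x => i + 1 ≤ x)).sort (· ≤ ·) := by
  refine (fun hp hs => List.Perm.eq_of_pairwise' (r := (· ≤ ·)) (Finset.pairwise_sort _ _) hs hp) ?_ ?_
  · rw [← Multiset.coe_eq_coe]
    have h2 : I.filter (fun x => i + 1 ≤ x) = I.filter (fun x => ¬ (x ≤ i)) :=
      Finset.filter_congr (fun x _ => by constructor <;> omega)
    rw [h2, ← Multiset.coe_add, Finset.sort_eq, Finset.sort_eq, Finset.sort_eq,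
      Finset.filter_val, Finset.filter_val, Multiset.filter_add_not]
  · refine List.pairwise_append.mpr ⟨Finset.pairwise_sort _ _, Finset.pairwise_sort _ _, ?_⟩
    intro x hx y hy
    have hx' : x ≤ i := (Finset.mem_filter.mp ((Finset.mem_sort _).mp hx)).2
    have hy' : i + 1 ≤ y := (Finset.mem_filter.mp ((Finset.mem_sort _).mp hy)).2
    omega

lemma getLast_eq : ∀ (l : List ℕ) (hne : l ≠ []) (i : ℕ), l.Pairwise (· < ·) → i ∈ l →
    (∀ x ∈ l, x ≤ i) → l.getLast hne = i
  | [], hne, _, _, _, _ => absurd rfl hne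
  | [a], _, i, _, hi, _ => by
      simp only [List.mem_singleton] at hi; simp [hi, List.getLast]
  | a :: b :: t, _, i, hpw, hi, hle => by
      rw [List.getLast_cons (by simp : b :: t ≠ [])]
      have hab : a < b := (List.pairwise_cons.mp hpw).1 b (by simp)
      have hit : i ∈ b :: t := by
        rcases List.mem_cons.mp hi with h | h
        · exfalso
          have := hle b (by simp)
          omega
        · exact h
      exact getLast_eq (b :: t) (by simp) i (List.pairwise_cons.mp hpw).2 hit
        (fun x hx => hle x (List.mem_cons_of_mem a hx))

lemma head_eq (l : List ℕ) (hne : l ≠ []) (i : ℕ) (hpw : l.Pairwise (· < ·)) (hi : i ∈ l)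
    (hge : ∀ x ∈ l, i ≤ x) : l.head hne = i := by
  cases l with
  | nil => exact absurd rfl hne
  | cons a t =>
    show a = i
    rcases List.mem_cons.mp hi with h | h
    · exact h.symm
    · have h1 := (List.pairwise_cons.mp hpw).1 i h
      have h2 := hge a (by simp)
      omega

variable {i : ℕ}

lemma e_fList_le (h1 : 1 ≤ i) (h2 : i ≤ N) (l : List ℕ) (hpw : l.Pairwise (· < ·))
    (hle : ∀ x ∈ l, x ≤ i) : Commute (egen F N i) (fList F N l) :=
  commute_fList F N _ (fun x => x ≤ i)
    (fun a b _ hb hab => commute_fij F N _ a b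
      (fun m _ hm' => ef_comm F N h1 h2 (by omega)) hab) l hpw hle

lemma e_fList_ge (h1 : 1 ≤ i) (h2 : i ≤ N) (l : List ℕ) (hpw : l.Pairwise (· < ·))
    (hge : ∀ x ∈ l, i + 1 ≤ x) : Commute (egen F N i) (fList F N l) :=
  commute_fList F N _ (fun x => i + 1 ≤ x)
    (fun a b ha _ hab => commute_fij F N _ a b
      (fun m hm _ => ef_comm F N h1 h2 (by omega)) hab) l hpw hge

lemma k_fList_far (h1 : 1 ≤ i) (h2 : i ≤ N) (l : List ℕ) (hpw : l.Pairwise (· < ·))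
    (hge : ∀ x ∈ l, i + 2 ≤ x) : Commute (kgen F N i) (fList F N l) :=
  commute_fList F N _ (fun x => i + 2 ≤ x)
    (fun a b ha _ hab => commute_fij F N _ a b
      (fun m hm _ => kf_comm_far F N h1 h2 (by omega)) hab) l hpw hge

lemma kinv_fList_far (h1 : 1 ≤ i) (h2 : i ≤ N) (l : List ℕ) (hpw : l.Pairwise (· < ·))
    (hge : ∀ x ∈ l, i + 2 ≤ x) : Commute (kinvgen F N i) (fList F N l) :=
  commute_fList F N _ (fun x => i + 2 ≤ x)
    (fun a b ha _ hab => commute_fij F N _ a b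
      (fun m hm _ => kinvf_comm_far F N h1 h2 (by omega)) hab) l hpw hge

lemma k_fList_head (h1 : 1 ≤ i) (hiN : i + 1 ≤ N) (l : List ℕ)
    (hpw : ((i + 1) :: l).Pairwise (· < ·)) (hne : l ≠ []) :
    kgen F N i * fList F N ((i + 1) :: l) =
      qq F • (fList F N ((i + 1) :: l) * kgen F N i) := by
  cases l with
  | nil => exact absurd rfl hne
  | cons b t =>
    rw [fList_cons_cons]
    have hx : ∀ x ∈ b :: t, i + 2 ≤ x := fun x hx =>
      by have := (List.pairwise_cons.mp hpw).1 x hx; omega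
    have hfij : kgen F N i * fij F N (i + 1) b = qq F • (fij F N (i + 1) b * kgen F N i) := by
      show kgen F N i * fword F N (i + 1) (b - (i + 1) - 1) = _
      exact semiconj_fword F N _ _ _ (kf_q F N h1 hiN)
        (fun m hm => kf_comm_far F N h1 (by omega) (by omega)) _
    exact semiconj_mul F N hfij
      (k_fList_far F N h1 (by omega) (b :: t) (List.pairwise_cons.mp hpw).2 hx)

lemma kinv_fList_head (h1 : 1 ≤ i) (hiN : i + 1 ≤ N) (l : List ℕ)
    (hpw : ((i + 1) :: l).Pairwise (· < ·)) (hne : l ≠ []) :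
    kinvgen F N i * fList F N ((i + 1) :: l) =
      (qq F ^ (-1 : ℤ)) • (fList F N ((i + 1) :: l) * kinvgen F N i) := by
  cases l with
  | nil => exact absurd rfl hne
  | cons b t =>
    rw [fList_cons_cons]
    have hx : ∀ x ∈ b :: t, i + 2 ≤ x := fun x hx =>
      by have := (List.pairwise_cons.mp hpw).1 x hx; omega
    have hfij : kinvgen F N i * fij F N (i + 1) b =
        (qq F ^ (-1 : ℤ)) • (fij F N (i + 1) b * kinvgen F N i) := by
      show kinvgen F N i * fword F N (i + 1) (b - (i + 1) - 1) = _
      exact semiconj_fword F N _ _ _ (kinvf_q F N h1 hiN)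
        (fun m hm => kinvf_comm_far F N h1 (by omega) (by omega)) _
    exact semiconj_mul F N hfij
      (kinv_fList_far F N h1 (by omega) (b :: t) (List.pairwise_cons.mp hpw).2 hx)

lemma smul_mk (lam : ℕ → ℤ) (u x : Uq F N) :
    u • (Submodule.Quotient.mk x : Verma F N lam) = Submodule.Quotient.mk (u * x) := by
  rw [← Submodule.Quotient.mk_smul]
  rfl

end UqAux
end Aux4


open UqAux in
/-- for `I ∈ S_i` and any weight `λ`: if `i = N` then
`e_N f_I v_λ = (q²-q^{-2})⁻¹ f_{I₁} (k_N² - k_N^{-2}) v_λ`; if `i < N` then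
`e_i f_I v_λ = (q²-q^{-2})⁻¹ f_{I₁} f_{I₂} (q² k_i² - q^{-2} k_i^{-2}) v_λ` in `M(λ)`. -/
theorem stmt6 (F : Type) [Field F] (N : ℕ) (hN : 1 ≤ N) (lam : ℕ → ℤ) (i : ℕ)
    (h1 : 1 ≤ i) (h2 : i ≤ N) (I : Finset ℕ) (hI : I ∈ II N)
    (hiI : i ∈ I) (hi1I : i + 1 ∈ I) :
    (i = N →
      egen F N i • (fSet F N I • hw F N lam) =
        ((qq F ^ 2 - qq F ^ (-2 : ℤ))⁻¹ •
          (fSet F N (I.filter (· ≤ i)) *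
            ((kgen F N i) ^ 2 - (kinvgen F N i) ^ 2))) • hw F N lam) ∧
    (i < N →
      egen F N i • (fSet F N I • hw F N lam) =
        ((qq F ^ 2 - qq F ^ (-2 : ℤ))⁻¹ •
          (fSet F N (I.filter (· ≤ i)) * fSet F N (I.filter fun x => i + 1 ≤ x) *
            (qq F ^ 2 • (kgen F N i) ^ 2 -
              qq F ^ (-2 : ℤ) • (kinvgen F N i) ^ 2))) • hw F N lam) := by
  classical
  have hI' := Finset.mem_filter.mp hI
  obtain ⟨hIsub, h1I, hN1I⟩ :
      I ⊆ Finset.Icc 1 (N + 1) ∧ 1 ∈ I ∧ N + 1 ∈ I :=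
    ⟨Finset.mem_powerset.mp hI'.1, hI'.2.1, hI'.2.2⟩
  have hmemI : ∀ x ∈ I, 1 ≤ x ∧ x ≤ N + 1 := fun x hx => Finset.mem_Icc.mp (hIsub hx)
  set c : kk F := (qq F ^ 2 - qq F ^ (-2 : ℤ))⁻¹ with hc
  set I₁ := I.filter (· ≤ i) with hI₁
  set I₂ := I.filter (fun x => i + 1 ≤ x) with hI₂
  set l₁ := I₁.sort (· ≤ ·) with hl₁
  set l₂ := I₂.sort (· ≤ ·) with hl₂
  -- basic facts about `l₁`
  have hil₁ : i ∈ l₁ := (Finset.mem_sort _).mpr (Finset.mem_filter.mpr ⟨hiI, le_rfl⟩)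
  have hl₁ne : l₁ ≠ [] := List.ne_nil_of_mem hil₁
  have hl₁le : ∀ x ∈ l₁, x ≤ i := fun x hx =>
    (Finset.mem_filter.mp ((Finset.mem_sort _).mp hx)).2
  have hl₁pw : l₁.Pairwise (· < ·) := (Finset.sortedLT_sort _).pairwise
  have hlast : l₁.getLast hl₁ne = i := getLast_eq l₁ hl₁ne i hl₁pw hil₁ hl₁le
  -- basic facts about `l₂`
  have hi1l₂ : i + 1 ∈ l₂ := (Finset.mem_sort _).mpr (Finset.mem_filter.mpr ⟨hi1I, le_rfl⟩)
  have hl₂ne : l₂ ≠ [] := List.ne_nil_of_mem hi1l₂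
  have hl₂ge : ∀ x ∈ l₂, i + 1 ≤ x := fun x hx =>
    (Finset.mem_filter.mp ((Finset.mem_sort _).mp hx)).2
  have hl₂pw : l₂.Pairwise (· < ·) := (Finset.sortedLT_sort _).pairwise
  have hhead : l₂.head hl₂ne = i + 1 := head_eq l₂ hl₂ne (i + 1) hl₂pw hi1l₂ hl₂ge
  have hl₂cons : l₂ = (i + 1) :: l₂.tail := by
    conv_lhs => rw [← List.cons_head_tail hl₂ne]
    rw [hhead]
  -- splitting `f_I`
  have hsplit : fSet F N I = fList F N l₁ * (fgen F N i * fList F N l₂) := by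
    show fList F N (I.sort (· ≤ ·)) = _
    rw [sort_split I i, ← hI₁, ← hI₂, ← hl₁, ← hl₂, fList_split F N l₁ hl₁ne l₂, hlast]
    congr 1
    conv_lhs => rw [hl₂cons]
    rw [fList_cons_cons, ← hl₂cons]
    congr 1
    show fword F N i (i + 1 - i - 1) = fgen F N i
    have h0 : i + 1 - i - 1 = 0 := by omega
    rw [h0]
    rfl
  -- commutation of `e_i` with the two flanks
  have hE1 : Commute (egen F N i) (fList F N l₁) := e_fList_le F N h1 h2 l₁ hl₁pw hl₁le
  have hE2 : Commute (egen F N i) (fList F N l₂) := e_fList_ge F N h1 h2 l₂ hl₂pw hl₂ge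
  set A := fList F N l₁ with hA
  set B := fList F N l₂ with hB
  set K := (kgen F N i) ^ 2 - (kinvgen F N i) ^ 2 with hK
  have hef : egen F N i * fgen F N i = fgen F N i * egen F N i + c • K :=
    ef_same F N h1 h2
  -- the main identity in `U`
  have hmain : egen F N i * fSet F N I =
      fSet F N I * egen F N i + c • (A * (K * B)) := by
    rw [hsplit]
    have hexp : (fgen F N i * egen F N i + c • K) * B =
        (fgen F N i * B) * egen F N i + c • (K * B) := by
      rw [add_mul, smul_mul_assoc, mul_assoc, hE2.eq, ← mul_assoc]
    calc egen F N i * (A * (fgen F N i * B))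
        = A * (egen F N i * (fgen F N i * B)) := by
          rw [← mul_assoc, hE1.eq, mul_assoc]
      _ = A * ((egen F N i * fgen F N i) * B) := by
          rw [mul_assoc (egen F N i) (fgen F N i) B]
      _ = A * ((fgen F N i * B) * egen F N i + c • (K * B)) := by rw [hef, hexp]
      _ = (A * (fgen F N i * B)) * egen F N i + c • (A * (K * B)) := by
          rw [mul_add, mul_smul_comm, ← mul_assoc]
  -- membership of the error term in the Verma ideal
  have hEmem : fSet F N I * egen F N i ∈ vermaIdeal F N lam := by
    have he : egen F N i ∈ vermaIdeal F N lam :=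
      Submodule.subset_span (Set.mem_union_left _ ⟨i, h1, h2, rfl⟩)
    simpa [smul_eq_mul] using (vermaIdeal F N lam).smul_mem (fSet F N I) he
  have hLHS : egen F N i • (fSet F N I • hw F N lam) =
      (Submodule.Quotient.mk (egen F N i * fSet F N I) : Verma F N lam) := by
    show egen F N i • (fSet F N I • (Submodule.Quotient.mk 1 : Verma F N lam)) = _
    rw [smul_mk, mul_one, smul_mk]
  constructor
  · -- case i = N
    intro hiN
    have hI₂sing : I₂ = {N + 1} := by
      ext x
      simp only [hI₂, Finset.mem_filter, Finset.mem_singleton]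
      constructor
      · rintro ⟨hxI, hx⟩
        have := hmemI x hxI
        omega
      · rintro rfl
        exact ⟨hN1I, by omega⟩
    have hB1 : B = 1 := by
      rw [hB, hl₂, hI₂sing, Finset.sort_singleton]
      rfl
    rw [hLHS]
    show _ = ((c • (A * K)) • (Submodule.Quotient.mk 1 : Verma F N lam))
    rw [smul_mk, mul_one]
    rw [Submodule.Quotient.eq]
    rw [hmain, hB1, mul_one]
    simpa using hEmem
  · -- case i < N
    intro hiN
    have htailne : l₂.tail ≠ [] := by
      intro h
      have hthis : l₂ = [i + 1] := by rw [hl₂cons, h]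
      have hmem : (N + 1 : ℕ) ∈ l₂ :=
        (Finset.mem_sort _).mpr (Finset.mem_filter.mpr ⟨hN1I, by omega⟩)
      rw [hthis] at hmem
      simp at hmem
      omega
    have hpwcons : ((i + 1) :: l₂.tail).Pairwise (· < ·) := by rw [← hl₂cons]; exact hl₂pw
    have hk : kgen F N i * B = qq F • (B * kgen F N i) := by
      rw [hB]
      conv_lhs => rw [hl₂cons]
      conv_rhs => rw [hl₂cons]
      exact k_fList_head F N h1 (by omega) l₂.tail hpwcons htailne
    have hkinv : kinvgen F N i * B = (qq F ^ (-1 : ℤ)) • (B * kinvgen F N i) := by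
      rw [hB]
      conv_lhs => rw [hl₂cons]
      conv_rhs => rw [hl₂cons]
      exact kinv_fList_head F N h1 (by omega) l₂.tail hpwcons htailne
    have hk2 : kgen F N i ^ 2 * B = (qq F ^ 2) • (B * kgen F N i ^ 2) :=
      semiconj_sq F N hk
    have hkinv2 : kinvgen F N i ^ 2 * B = (qq F ^ (-2 : ℤ)) • (B * kinvgen F N i ^ 2) := by
      have h := semiconj_sq F N hkinv
      rw [← zpow_natCast (qq F ^ (-1 : ℤ)) 2, ← zpow_mul] at h
      norm_num at h
      exact h
    have hKB : K * B = B * (qq F ^ 2 • kgen F N i ^ 2 - qq F ^ (-2 : ℤ) • kinvgen F N i ^ 2) := by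
      rw [hK, sub_mul, hk2, hkinv2, mul_sub, mul_smul_comm, mul_smul_comm]
    rw [hLHS]
    show _ = ((c • (A * B *
      (qq F ^ 2 • kgen F N i ^ 2 - qq F ^ (-2 : ℤ) • kinvgen F N i ^ 2))) •
        (Submodule.Quotient.mk 1 : Verma F N lam))
    rw [smul_mk, mul_one]
    rw [Submodule.Quotient.eq]
    rw [hmain, hKB, ← mul_assoc]
    simpa using hEmem
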